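/- Let D^{-1} : (0,∞) → (0,∞) be the inverse of the strictly decreasing bijection D. Then D^{-1}(y)/√(2(−log y)) → 1 as y → 0+, and √(2π) · y · D^{-1}(y) → 1 as y → ∞. -/

import Mathlib

open MeasureTheory Filter Topology

/-- Standard normal density `φ(z) = e^{-z²/2}/√(2π)`. -/
noncomputable def stdPDF (z : ℝ) : ℝ := Real.exp (-(z^2)/2) / Real.sqrt (2*Real.pi)

/-- Standard normal distribution function `Φ(z) = ∫_{-∞}^z φ(t) dt`. -/
noncomputable def stdCDF (z : ℝ) : ℝ := ∫ t in Set.Iic z, stdPDF t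

/-- The function `D(z) = φ(z)/z - Φ(-z)`, a strictly decreasing bijection
from `(0,∞)` to `(0,∞)`. -/
noncomputable def Dfun (z : ℝ) : ℝ := stdPDF z / z - stdCDF (-z)

/-- The inverse `D⁻¹ : (0,∞) → (0,∞)` of `D`. -/
noncomputable def Dinv (y : ℝ) : ℝ := Function.invFunOn Dfun (Set.Ioi 0) y

section DinvProof

open Set

lemma stdPDF_pos (z : ℝ) : 0 < stdPDF z := by
  unfold stdPDF
  positivity

lemma stdPDF_neg (z : ℝ) : stdPDF (-z) = stdPDF z := by simp [stdPDF]

lemma continuous_stdPDF : Continuous stdPDF := by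
  unfold stdPDF
  fun_prop

lemma integrable_stdPDF : Integrable stdPDF := by
  have h : Integrable (fun x : ℝ => Real.exp (-(1/2) * x^2)) := integrable_exp_neg_mul_sq (by norm_num)
  have := h.div_const (Real.sqrt (2*Real.pi))
  apply this.congr (Eventually.of_forall ?_)
  intro x
  simp only [stdPDF]
  ring_nf

lemma stdCDF_nonneg (z : ℝ) : 0 ≤ stdCDF z :=
  setIntegral_nonneg measurableSet_Iic (fun t _ => (stdPDF_pos t).le)

lemma hasDerivAt_stdCDF (x : ℝ) : HasDerivAt stdCDF (stdPDF x) x := by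
  have key : ∀ z : ℝ, stdCDF z = stdCDF 0 + ∫ t in (0:ℝ)..z, stdPDF t := by
    intro z
    rw [← intervalIntegral.integral_Iic_sub_Iic integrable_stdPDF.integrableOn
      integrable_stdPDF.integrableOn]
    unfold stdCDF; ring
  have h : HasDerivAt (fun z => stdCDF 0 + ∫ t in (0:ℝ)..z, stdPDF t) (stdPDF x) x := by
    apply HasDerivAt.const_add
    exact intervalIntegral.integral_hasDerivAt_right
      (continuous_stdPDF.intervalIntegrable 0 x)
      (continuous_stdPDF.stronglyMeasurableAtFilter _ _)
      continuous_stdPDF.continuousAt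
  exact h.congr_of_eventuallyEq (Eventually.of_forall key)

lemma continuous_stdCDF : Continuous stdCDF := by
  have : ∀ x, ContinuousAt stdCDF x := fun x => (hasDerivAt_stdCDF x).continuousAt
  exact continuous_iff_continuousAt.2 this

lemma stdCDF_tendsto_atBot : Tendsto stdCDF atBot (𝓝 0) := by
  have h := intervalIntegral_tendsto_integral_Iic (μ := volume) (0:ℝ)
    integrable_stdPDF.integrableOn (tendsto_id (α := ℝ))
  have heq : ∀ i : ℝ, (∫ x in i..(0:ℝ), stdPDF x) = stdCDF 0 - stdCDF i := by
    intro i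
    rw [← intervalIntegral.integral_Iic_sub_Iic integrable_stdPDF.integrableOn
      integrable_stdPDF.integrableOn]
    rfl
  have h2 : Tendsto (fun i : ℝ => stdCDF 0 - stdCDF i) atBot (𝓝 (stdCDF 0)) := by
    refine Tendsto.congr (fun i => (heq i)) ?_
    simpa [stdCDF] using h
  have h3 := (tendsto_const_nhds (x := stdCDF 0) (f := atBot)).sub h2
  simpa using h3

lemma hasDerivAt_stdPDF (x : ℝ) : HasDerivAt stdPDF (-x * stdPDF x) x := by
  have h1 : HasDerivAt (fun z : ℝ => -(z^2)/2) (-x) x := by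
    have := ((hasDerivAt_pow 2 x).neg).div_const 2
    simpa using this.congr_deriv (by ring)
  have h2 := (h1.exp).div_const (Real.sqrt (2*Real.pi))
  have : HasDerivAt stdPDF (Real.exp (-(x^2)/2) * (-x) / Real.sqrt (2*Real.pi)) x := h2
  convert this using 1
  unfold stdPDF; ring

lemma hasDerivAt_Dfun {x : ℝ} (hx : x ≠ 0) :
    HasDerivAt Dfun (-(stdPDF x / x^2)) x := by
  have h1 : HasDerivAt (fun z => stdPDF z / z)
      ((-x * stdPDF x * x - stdPDF x * 1) / x^2) x :=
    (hasDerivAt_stdPDF x).div (hasDerivAt_id x) hx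
  have h2 : HasDerivAt (fun z => stdCDF (-z)) (-stdPDF x) x := by
    have := (hasDerivAt_stdCDF (-x)).comp x (hasDerivAt_neg x)
    simpa [stdPDF_neg, Function.comp_def] using this
  have h3 := h1.sub h2
  have h3' : HasDerivAt Dfun ((-x * stdPDF x * x - stdPDF x * 1) / x^2 - -stdPDF x) x := h3
  convert h3' using 1
  field_simp
  ring

lemma strictAntiOn_Dfun : StrictAntiOn Dfun (Set.Ioi 0) := by
  apply strictAntiOn_of_deriv_neg (convex_Ioi 0)
  · intro x hx
    exact (hasDerivAt_Dfun (ne_of_gt hx)).continuousAt.continuousWithinAt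
  · intro x hx
    rw [interior_Ioi] at hx
    rw [(hasDerivAt_Dfun (ne_of_gt hx)).deriv]
    have h1 := stdPDF_pos x
    have hx' : (0:ℝ) < x := hx
    have hx2 : (0:ℝ) < x^2 := by positivity
    have : 0 < stdPDF x / x^2 := div_pos h1 hx2
    linarith

lemma tendsto_stdPDF_atTop : Tendsto stdPDF atTop (𝓝 0) := by
  unfold stdPDF
  rw [show (0:ℝ) = 0 / Real.sqrt (2*Real.pi) by simp]
  apply Tendsto.div_const
  apply Real.tendsto_exp_atBot.comp
  have h1 : Tendsto (fun z : ℝ => z^2) atTop atTop := tendsto_pow_atTop (by norm_num)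
  have h2 : Tendsto (fun z : ℝ => (z^2) * (-(1/2))) atTop atBot :=
    h1.atTop_mul_neg (by norm_num) tendsto_const_nhds
  exact h2.congr (fun z => by ring)

lemma Dfun_tendsto_atTop : Tendsto Dfun atTop (𝓝 0) := by
  have h1 : Tendsto (fun z : ℝ => stdPDF z / z) atTop (𝓝 0) := by
    have hb : ∀ᶠ z : ℝ in atTop, stdPDF z / z ≤ stdPDF z := by
      filter_upwards [eventually_ge_atTop (1:ℝ)] with z hz
      exact div_le_self (stdPDF_pos z).le hz
    have hb2 : ∀ᶠ z : ℝ in atTop, 0 ≤ stdPDF z / z := by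
      filter_upwards [eventually_gt_atTop (0:ℝ)] with z hz
      exact le_of_lt (div_pos (stdPDF_pos z) hz)
    exact tendsto_of_tendsto_of_tendsto_of_le_of_le' tendsto_const_nhds
      tendsto_stdPDF_atTop hb2 hb
  have h2 : Tendsto (fun z : ℝ => stdCDF (-z)) atTop (𝓝 0) :=
    stdCDF_tendsto_atBot.comp tendsto_neg_atTop_atBot
  have := h1.sub h2
  simp only [sub_zero] at this
  exact this

lemma Dfun_tendsto_zero : Tendsto Dfun (𝓝[>] 0) atTop := by
  have h1 : Tendsto (fun z : ℝ => stdPDF z / z) (𝓝[>] 0) atTop := by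
    have ha : Tendsto stdPDF (𝓝[>] 0) (𝓝 (stdPDF 0)) :=
      (continuous_stdPDF.tendsto 0).mono_left nhdsWithin_le_nhds
    have hb : Tendsto (fun z : ℝ => z⁻¹) (𝓝[>] 0) atTop := tendsto_inv_nhdsGT_zero
    have := Tendsto.pos_mul_atTop (stdPDF_pos 0) ha hb
    exact this.congr (fun z => by rw [div_eq_mul_inv])
  have h2 : Tendsto (fun z : ℝ => stdCDF (-z)) (𝓝[>] 0) (𝓝 (stdCDF 0)) := by
    have : Tendsto (fun z:ℝ => stdCDF (-z)) (𝓝 0) (𝓝 (stdCDF 0)) := by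
      have := continuous_stdCDF.comp continuous_neg
      simpa [Function.comp_def] using this.tendsto 0
    exact this.mono_left nhdsWithin_le_nhds
  exact h1.atTop_add h2.neg

lemma Dfun_pos {z : ℝ} (hz : 0 < z) : 0 < Dfun z := by
  have h1 : Dfun (z+1) < Dfun z := strictAntiOn_Dfun hz (by simp; linarith) (by linarith)
  -- Dfun is antitone on Ioi 0 and tends to 0, so Dfun (z+1) ≥ 0
  have hev : ∀ᶠ w : ℝ in atTop, Dfun w ≤ Dfun (z+1) := by
    filter_upwards [eventually_ge_atTop (z+1)] with w hw
    rcases eq_or_lt_of_le hw with rfl | hlt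
    · exact le_rfl
    · exact (strictAntiOn_Dfun (show (z+1) ∈ Ioi (0:ℝ) by simp; linarith)
        (show w ∈ Ioi (0:ℝ) by simp; linarith) hlt).le
  have h2 : (0:ℝ) ≤ Dfun (z+1) := le_of_tendsto Dfun_tendsto_atTop hev
  linarith

lemma sqrt_two_pi_le_exp_one : Real.sqrt (2*Real.pi) ≤ Real.exp 1 := by
  rw [show Real.exp 1 = Real.sqrt ((Real.exp 1)^2) by rw [Real.sqrt_sq (Real.exp_pos 1).le]]
  apply Real.sqrt_le_sqrt
  have h1 : (2.7182818283 : ℝ) < Real.exp 1 := Real.exp_one_gt_d9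
  have h2 : Real.pi < 3.15 := Real.pi_lt_d2
  nlinarith

lemma one_le_sqrt_two_pi : (1:ℝ) ≤ Real.sqrt (2*Real.pi) := by
  rw [show (1:ℝ) = Real.sqrt 1 by simp]
  apply Real.sqrt_le_sqrt
  have := Real.pi_gt_three
  linarith

lemma Dfun_ftc {z : ℝ} (hz : 0 < z) :
    Dfun z - Dfun (z+1) = ∫ t in z..(z+1), stdPDF t / t^2 := by
  have hderiv : ∀ t ∈ Set.uIcc z (z+1), HasDerivAt (fun u => -Dfun u) (stdPDF t / t^2) t := by
    intro t ht
    rw [Set.uIcc_of_le (by linarith : z ≤ z+1)] at ht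
    have ht0 : t ≠ 0 := by have := ht.1; intro h; rw [h] at this; linarith
    have := (hasDerivAt_Dfun ht0).neg
    rw [neg_neg] at this
    exact this
  have hint : IntervalIntegrable (fun t => stdPDF t / t^2) volume z (z+1) := by
    apply ContinuousOn.intervalIntegrable
    apply ContinuousOn.div continuous_stdPDF.continuousOn (by fun_prop)
    intro t ht
    rw [Set.uIcc_of_le (by linarith : z ≤ z+1)] at ht
    have h0 : 0 < t := lt_of_lt_of_le hz ht.1
    positivity
  have := intervalIntegral.integral_eq_sub_of_hasDerivAt hderiv hint
  rw [this]; ring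

lemma Dfun_ge_pdf {z : ℝ} (hz : 0 < z) : stdPDF (z+1) / (z+1)^2 ≤ Dfun z := by
  have h1 := Dfun_ftc hz
  have h2 : (stdPDF (z+1) / (z+1)^2) ≤ ∫ t in z..(z+1), stdPDF t / t^2 := by
    have hconst : (stdPDF (z+1) / (z+1)^2) = ∫ t in z..(z+1), (stdPDF (z+1) / (z+1)^2) := by
      simp
    rw [hconst]
    apply intervalIntegral.integral_mono_on (by linarith)
      (intervalIntegrable_const)
    · apply ContinuousOn.intervalIntegrable
      apply ContinuousOn.div continuous_stdPDF.continuousOn (by fun_prop)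
      intro t ht
      rw [Set.uIcc_of_le (by linarith : z ≤ z+1)] at ht
      have h0 : 0 < t := lt_of_lt_of_le hz ht.1
      positivity
    · intro t ht
      have ht1 : z ≤ t := ht.1
      have ht2 : t ≤ z + 1 := ht.2
      have htpos : 0 < t := lt_of_lt_of_le hz ht1
      have hpdf : stdPDF (z+1) ≤ stdPDF t := by
        unfold stdPDF
        have : Real.exp (-(t^2)/2) ≤ Real.exp (-((z+1)^2)/2) ∨ True := Or.inr trivial
        gcongr
      exact div_le_div₀ (stdPDF_pos t).le hpdf (by positivity) (by nlinarith)
  have h3 := Dfun_pos (show (0:ℝ) < z+1 by linarith)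
  linarith

lemma Dfun_lower {z : ℝ} (hz : 0 < z) : Real.exp (-((z+3)^2)/2) ≤ Dfun z := by
  refine le_trans ?_ (Dfun_ge_pdf hz)
  unfold stdPDF
  rw [div_div]
  rw [le_div_iff₀ (by positivity)]
  have h1 : Real.sqrt (2*Real.pi) * (z+1)^2 ≤ Real.exp 1 * (Real.exp z * Real.exp z) := by
    have h2 : z + 1 ≤ Real.exp z := Real.add_one_le_exp z
    have h3 : (z+1)^2 ≤ Real.exp z * Real.exp z := by nlinarith [Real.exp_pos z]
    have h4 : (0:ℝ) ≤ (z+1)^2 := by positivity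
    have h5 := sqrt_two_pi_le_exp_one
    nlinarith [Real.exp_pos (1:ℝ), Real.sqrt_nonneg (2*Real.pi),
      mul_le_mul_of_nonneg_left h3 (Real.exp_pos (1:ℝ)).le,
      mul_le_mul_of_nonneg_right h5 h4]
  calc Real.exp (-(z+3)^2/2) * (Real.sqrt (2*Real.pi) * (z+1)^2)
      ≤ Real.exp (-(z+3)^2/2) * (Real.exp 1 * (Real.exp z * Real.exp z)) := by
        apply mul_le_mul_of_nonneg_left h1 (Real.exp_pos _).le
    _ = Real.exp (-(z+3)^2/2 + 1 + z + z) := by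
        rw [← Real.exp_add, ← Real.exp_add, ← Real.exp_add]; ring_nf
    _ ≤ Real.exp (-(z+1)^2/2) := by
        apply Real.exp_le_exp.2
        nlinarith

lemma Dfun_upper {z : ℝ} (hz : 1 ≤ z) : Dfun z ≤ Real.exp (-(z^2)/2) := by
  have h1 : Dfun z ≤ stdPDF z / z := by
    unfold Dfun
    have := stdCDF_nonneg (-z)
    linarith
  refine h1.trans ?_
  unfold stdPDF
  rw [div_div]
  apply div_le_self (Real.exp_pos _).le
  nlinarith [one_le_sqrt_two_pi]

lemma continuousOn_Dfun : ContinuousOn Dfun (Set.Ioi 0) := fun x hx =>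
  (hasDerivAt_Dfun (ne_of_gt hx)).continuousAt.continuousWithinAt

lemma Dfun_image {y : ℝ} (hy : 0 < y) : y ∈ Dfun '' Set.Ioi 0 := by
  obtain ⟨a, ha1, ha2⟩ : ∃ a, y < Dfun a ∧ 0 < a :=
    ((Dfun_tendsto_zero.eventually_gt_atTop y).and self_mem_nhdsWithin).exists
  obtain ⟨b, hb1, hb2⟩ : ∃ b, Dfun b < y ∧ a < b :=
    ((Dfun_tendsto_atTop.eventually_lt_const hy).and (eventually_gt_atTop a)).exists
  have hsub : Set.Ioo (Dfun b) (Dfun a) ⊆ Dfun '' Set.Ioo a b :=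
    intermediate_value_Ioo' hb2.le (continuousOn_Dfun.mono (fun t ht => lt_of_lt_of_le ha2 ht.1))
  have : y ∈ Dfun '' Set.Ioo a b := hsub ⟨hb1, ha1⟩
  exact Set.image_mono (fun t ht => lt_trans ha2 ht.1) this

lemma Dinv_mem {y : ℝ} (hy : 0 < y) : Dinv y ∈ Set.Ioi 0 :=
  Function.invFunOn_mem (Dfun_image hy)

lemma Dfun_Dinv {y : ℝ} (hy : 0 < y) : Dfun (Dinv y) = y :=
  Function.invFunOn_eq (Dfun_image hy)

lemma Dinv_tendsto_atTop : Tendsto Dinv (𝓝[>] 0) atTop := by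
  rw [tendsto_atTop]
  intro M
  set M' := max M 1 with hM'
  have hM'pos : (0:ℝ) < M' := lt_of_lt_of_le one_pos (le_max_right M 1)
  have hD := Dfun_pos hM'pos
  filter_upwards [Ioo_mem_nhdsGT_of_mem (Set.mem_Ico.2 ⟨le_refl (0:ℝ), hD⟩)] with y hy
  have hy0 : 0 < y := hy.1
  have hy1 : y < Dfun M' := hy.2
  have hinv := Dinv_mem hy0
  by_contra h
  push_neg at h
  have h2 : Dinv y < M' := lt_of_lt_of_le h (le_max_left M 1)
  have := strictAntiOn_Dfun hinv (Set.mem_Ioi.2 hM'pos) h2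
  rw [Dfun_Dinv hy0] at this
  linarith

lemma Dinv_tendsto_zero : Tendsto Dinv atTop (𝓝[>] 0) := by
  rw [tendsto_nhdsWithin_iff]
  constructor
  · rw [tendsto_order]
    constructor
    · intro b hb
      filter_upwards [eventually_gt_atTop (0:ℝ)] with y hy
      exact lt_trans hb (Dinv_mem hy)
    · intro c hc
      filter_upwards [eventually_gt_atTop (max (Dfun c) 0)] with y hy
      have hy0 : 0 < y := lt_of_le_of_lt (le_max_right _ _) hy
      by_contra h
      push_neg at h
      have h3 : Dfun (Dinv y) ≤ Dfun c := by
        rcases eq_or_lt_of_le h with heq | hlt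
        · rw [← heq]
        · exact (strictAntiOn_Dfun (Set.mem_Ioi.2 hc) (Dinv_mem hy0) hlt).le
      rw [Dfun_Dinv hy0] at h3
      have := lt_of_le_of_lt (le_max_left (Dfun c) 0) hy
      linarith
  · filter_upwards [eventually_gt_atTop (0:ℝ)] with y hy
    exact Dinv_mem hy

noncomputable def Ffun (z : ℝ) : ℝ :=
  Real.exp (-(z^2)/2) - Real.sqrt (2*Real.pi) * z * stdCDF (-z)

lemma Ffun_eq {z : ℝ} (hz : 0 < z) : Ffun z = Real.sqrt (2*Real.pi) * Dfun z * z := by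
  have hs : Real.sqrt (2*Real.pi) ≠ 0 := by
    have : (0:ℝ) < Real.sqrt (2*Real.pi) := Real.sqrt_pos.2 (by positivity)
    exact this.ne'
  unfold Ffun Dfun stdPDF
  field_simp

lemma part2 : Tendsto (fun y => Real.sqrt (2*Real.pi) * y * Dinv y) atTop (𝓝 1) := by
  have hFcont : Continuous Ffun := by
    unfold Ffun
    exact (by fun_prop : Continuous fun z : ℝ => Real.exp (-(z^2)/2)).sub
      ((continuous_const.mul continuous_id).mul (continuous_stdCDF.comp continuous_neg))
  have hF0 : Ffun 0 = 1 := by simp [Ffun]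
  have hF : Tendsto Ffun (𝓝 0) (𝓝 1) := by
    rw [← hF0]; exact hFcont.tendsto 0
  have hcomp : Tendsto (fun y => Ffun (Dinv y)) atTop (𝓝 1) :=
    hF.comp (Dinv_tendsto_zero.mono_right nhdsWithin_le_nhds)
  apply hcomp.congr'
  filter_upwards [eventually_gt_atTop (0:ℝ)] with y hy
  have hz : 0 < Dinv y := Dinv_mem hy
  rw [Ffun_eq hz, Dfun_Dinv hy]

lemma part1_aux : Tendsto (fun z => z / Real.sqrt (2 * (-Real.log (Dfun z)))) atTop (𝓝 1) := by
  have hlow : Tendsto (fun z : ℝ => z / (z+3)) atTop (𝓝 1) := by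
    have h1 : Tendsto (fun z : ℝ => 1 - 3 * (z+3)⁻¹) atTop (𝓝 (1 - 3 * 0)) :=
      tendsto_const_nhds.sub (tendsto_const_nhds.mul
        (tendsto_inv_atTop_zero.comp (tendsto_atTop_add_const_right _ 3 tendsto_id)))
    rw [show (1:ℝ) - 3 * 0 = 1 by ring] at h1
    apply h1.congr'
    filter_upwards [eventually_gt_atTop (0:ℝ)] with z hz
    have : z + 3 ≠ 0 := by linarith
    field_simp
    ring
  have key : ∀ᶠ z : ℝ in atTop,
      z / (z+3) ≤ z / Real.sqrt (2 * (-Real.log (Dfun z))) ∧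
      z / Real.sqrt (2 * (-Real.log (Dfun z))) ≤ 1 := by
    filter_upwards [eventually_ge_atTop (1:ℝ)] with z hz
    have hz0 : 0 < z := lt_of_lt_of_le one_pos hz
    have hD := Dfun_pos hz0
    have hlog_lo : z^2/2 ≤ -Real.log (Dfun z) := by
      have := (Real.log_le_iff_le_exp hD).2 (Dfun_upper hz)
      linarith
    have hlog_hi : -Real.log (Dfun z) ≤ (z+3)^2/2 := by
      have := (Real.le_log_iff_exp_le hD).2 (Dfun_lower hz0)
      linarith
    have hs_lo : z ≤ Real.sqrt (2 * (-Real.log (Dfun z))) := by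
      have h := Real.sqrt_le_sqrt (show z^2 ≤ 2 * (-Real.log (Dfun z)) by linarith)
      rwa [Real.sqrt_sq hz0.le] at h
    have hs_hi : Real.sqrt (2 * (-Real.log (Dfun z))) ≤ z + 3 := by
      have h := Real.sqrt_le_sqrt (show 2 * (-Real.log (Dfun z)) ≤ (z+3)^2 by linarith)
      rwa [Real.sqrt_sq (show (0:ℝ) ≤ z+3 by linarith)] at h
    have hspos : 0 < Real.sqrt (2 * (-Real.log (Dfun z))) := lt_of_lt_of_le hz0 hs_lo
    constructor
    · exact div_le_div_of_nonneg_left hz0.le hspos hs_hi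
    · rw [div_le_one hspos]
      exact hs_lo
  exact tendsto_of_tendsto_of_tendsto_of_le_of_le' hlow tendsto_const_nhds
    (key.mono (fun z h => h.1)) (key.mono (fun z h => h.2))

lemma part1 : Tendsto (fun y => Dinv y / Real.sqrt (2 * (-Real.log y))) (𝓝[>] 0) (𝓝 1) := by
  have hcomp := part1_aux.comp Dinv_tendsto_atTop
  apply hcomp.congr'
  filter_upwards [self_mem_nhdsWithin] with y hy
  simp only [Function.comp_apply]
  rw [Dfun_Dinv hy]
end DinvProof

/-- **Asymptotics of `D⁻¹`.** `D⁻¹(y) ~ √(2(-log y))` as `y → 0⁺` and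
`D⁻¹(y) ~ 1/(√(2π) y)` as `y → ∞`. -/
theorem Dinv_asymptotics :
    Tendsto (fun y => Dinv y / Real.sqrt (2 * (-Real.log y))) (𝓝[>] 0) (𝓝 1) ∧
    Tendsto (fun y => Real.sqrt (2 * Real.pi) * y * Dinv y) atTop (𝓝 1) := by
  exact ⟨part1, part2⟩
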